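/- Let γ : [0,1] → [0,∞) satisfy γ(1)=0, γ decreasing, and γ(λθ) ≤ γ(θ) + θγ(λ) for all λ,θ ∈ [0,1], and suppose γ is α-Lipschitz. Define ψ(u,v) = u·γ(v/u) for 0 < v ≤ u (and ψ(0,0)=0). Then ψ ∈ 𝓑(α): that is, ψ(u,u)=0, ψ is subadditive (ψ(u,v) ≤ ψ(u,w)+ψ(w,v) for v ≤ w ≤ u), increasing in u, decreasing in v, and α-Lipschitz. -/
import Mathlib


open Set Filter

/-- The space `𝓑`: functions on `Δ = {(u,v) : 0 ≤ v ≤ u}` with `ψ(u,u)=0`, nonnegative,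
subadditive, increasing in the first variable and decreasing in the second. -/
def MemB (ψ : ℝ → ℝ → ℝ) : Prop :=
  (∀ u, 0 ≤ u → ψ u u = 0) ∧
  (∀ u v, 0 ≤ v → v ≤ u → 0 ≤ ψ u v) ∧
  (∀ u w v, 0 ≤ v → v ≤ w → w ≤ u → ψ u v ≤ ψ u w + ψ w v) ∧
  (∀ u w v, 0 ≤ v → v ≤ w → w ≤ u → ψ w v ≤ ψ u v) ∧
  (∀ u w v, 0 ≤ v → v ≤ w → w ≤ u → ψ u w ≤ ψ u v)

/-- The space `𝓑(α)`: members of `𝓑` which are `α`-Lipschitz for the `L¹` metric on `Δ`. -/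
def MemBLip (α : ℝ) (ψ : ℝ → ℝ → ℝ) : Prop :=
  MemB ψ ∧ ∀ u v u' v', 0 ≤ v → v ≤ u → 0 ≤ v' → v' ≤ u' →
    |ψ u v - ψ u' v'| ≤ α * (|u - u'| + |v - v'|)

/-- The space `𝓑̄_h(α)`: members of `𝓑(α)` which are increasing along diagonals and whose
restriction to the bottom edge grows at least at rate `h`. -/
def MemBbar (h α : ℝ) (ψ : ℝ → ℝ → ℝ) : Prop :=
  MemBLip α ψ ∧
  (∀ u v z, 0 ≤ v → v ≤ u → 0 ≤ z → ψ u v ≤ ψ (u + z) (v + z)) ∧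
  (∀ u v, 0 ≤ v → v ≤ u → h * (u - v) ≤ ψ u 0 - ψ v 0)

/-- The space `𝓖`: decreasing nonnegative functions on `[0,1]` vanishing at `1` with
`γ(λθ) ≤ γ(θ) + θγ(λ)`. -/
def MemG (γ : ℝ → ℝ) : Prop :=
  γ 1 = 0 ∧ (∀ θ, 0 ≤ θ → θ ≤ 1 → 0 ≤ γ θ) ∧
  (∀ a b, 0 ≤ a → a ≤ b → b ≤ 1 → γ b ≤ γ a) ∧
  (∀ l t, 0 ≤ l → l ≤ 1 → 0 ≤ t → t ≤ 1 → γ (l * t) ≤ γ t + t * γ l)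

/-- The space `𝓖(α)`: `α`-Lipschitz members of `𝓖`. -/
def MemGLip (α : ℝ) (γ : ℝ → ℝ) : Prop :=
  MemG γ ∧ ∀ a b, 0 ≤ a → a ≤ 1 → 0 ≤ b → b ≤ 1 → |γ a - γ b| ≤ α * |a - b|

/-- The space `𝓖̄_h(α)`: members of `𝓖(α)` with `γ(0) ≥ h` and `θ ↦ γ(θ)/(1-θ)` increasing. -/
def MemGbar (h α : ℝ) (γ : ℝ → ℝ) : Prop :=
  MemGLip α γ ∧ h ≤ γ 0 ∧
  ∀ a b, 0 ≤ a → a ≤ b → b < 1 → γ a / (1 - a) ≤ γ b / (1 - b)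

/-- The normalized limit `Γ(ψ)(θ) = limsup_{u→∞} ψ(u,θu)/u`. -/
noncomputable def Gam (ψ : ℝ → ℝ → ℝ) (θ : ℝ) : ℝ :=
  Filter.limsup (fun u => ψ u (θ * u) / u) Filter.atTop

/-- The projection `Φ_h(β)(u,v) = max_{0 ≤ z ≤ u}` of `β(u-z,v-z)` for `z ≤ v` and
`h(z-v) + β(u-z,0)` for `v ≤ z ≤ u`. -/
noncomputable def Phi (h : ℝ) (β : ℝ → ℝ → ℝ) (u v : ℝ) : ℝ :=
  sSup ((fun z => if z ≤ v then β (u - z) (v - z) else h * (z - v) + β (u - z) 0) ''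
    Set.Icc 0 u)

/-- The projection `Ω_h(γ)(θ) = (1-θ)·max{h, max_{0 ≤ λ ≤ θ} γ(λ)/(1-λ)}`. -/
noncomputable def Om (h : ℝ) (γ : ℝ → ℝ) (θ : ℝ) : ℝ :=
  (1 - θ) * max h (sSup ((fun l => γ l / (1 - l)) '' Set.Icc 0 θ))

/-- The space `𝓒(α)`: increasing `α`-Lipschitz functions `g : [0,∞) → [0,∞)` with `g(0)=0`. -/
def MemC (α : ℝ) (g : ℝ → ℝ) : Prop :=
  g 0 = 0 ∧ (∀ u, 0 ≤ u → 0 ≤ g u) ∧ (∀ a b, 0 ≤ a → a ≤ b → g a ≤ g b) ∧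
  (∀ a b, 0 ≤ a → 0 ≤ b → |g a - g b| ≤ α * |a - b|)

/-- If `γ ∈ 𝓖(α)`, then `ψ(u,v) = u·γ(v/u)` (with `ψ(0,0)=0`) belongs to `𝓑(α)`. -/
theorem homogeneous_extension (α : ℝ) (hα : 0 ≤ α) (γ : ℝ → ℝ) (hγ : MemGLip α γ) :
    MemBLip α (fun u v => u * γ (v / u)) := by

  obtain ⟨⟨h1, h0, hdec, hsubγ⟩, hlip⟩ := hγ
  have hγ0 : γ 0 ≤ α := by
    have h := hlip 0 1 le_rfl zero_le_one zero_le_one le_rfl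
    rw [h1] at h
    have e : |(0:ℝ) - 1| = 1 := by norm_num
    rw [e, sub_zero, mul_one] at h
    exact (le_abs_self _).trans h
  have hpos : ∀ u v : ℝ, 0 ≤ v → v ≤ u → 0 ≤ u * γ (v / u) := by
    intro u v hv hvu
    rcases eq_or_lt_of_le (hv.trans hvu) with h | h
    · simp [← h]
    · exact mul_nonneg h.le (h0 _ (div_nonneg hv h.le) ((div_le_one h).mpr hvu))
  have hsub' : ∀ u w v : ℝ, 0 ≤ v → v ≤ w → w ≤ u →
      u * γ (v / u) ≤ u * γ (w / u) + w * γ (v / w) := by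
    intro u w v hv hvw hwu
    rcases eq_or_lt_of_le (hv.trans (hvw.trans hwu)) with hu | hu
    · have hw0 : w = 0 := le_antisymm (hu ▸ hwu) (hv.trans hvw)
      have hv0 : v = 0 := le_antisymm (hw0 ▸ hvw) hv
      simp [← hu, hw0, hv0]
    · rcases eq_or_lt_of_le (hv.trans hvw) with hw | hw
      · have hv0 : v = 0 := le_antisymm (hw ▸ hvw) hv
        simp [← hw, hv0]
      · have key := hsubγ (v / w) (w / u) (div_nonneg hv hw.le) ((div_le_one hw).mpr hvw)
          (div_nonneg (hv.trans hvw) hu.le) ((div_le_one hu).mpr hwu)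
        have heq : v / w * (w / u) = v / u := by
          field_simp
        rw [heq] at key
        have key2 := mul_le_mul_of_nonneg_left key hu.le
        have h2 : u * (w / u * γ (v / w)) = w * γ (v / w) := by
          field_simp
        rw [mul_add, h2] at key2
        exact key2
  have edge : ∀ u u' : ℝ, 0 ≤ u' → u' ≤ u → u * γ (u' / u) ≤ α * (u - u') := by
    intro u u' hu' hu'u
    rcases eq_or_lt_of_le (hu'.trans hu'u) with hu | hu
    · have h0' : u' = 0 := le_antisymm (hu ▸ hu'u) hu'
      simp [← hu, h0']
    · have h := hlip (u' / u) 1 (div_nonneg hu' hu.le) ((div_le_one hu).mpr hu'u)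
        zero_le_one le_rfl
      rw [h1, sub_zero] at h
      have h2 : |(u' : ℝ) / u - 1| = 1 - u' / u := by
        rw [abs_of_nonpos (by linarith [(div_le_one hu).mpr hu'u])]; ring
      rw [h2] at h
      have h3 : γ (u' / u) ≤ α * (1 - u' / u) := (le_abs_self _).trans h
      have h4 : u * γ (u' / u) ≤ u * (α * (1 - u' / u)) :=
        mul_le_mul_of_nonneg_left h3 hu.le
      have h5 : u * (α * (1 - u' / u)) = α * (u - u') := by
        field_simp
      linarith
  have lipv : ∀ u v v' : ℝ, 0 ≤ v → v ≤ u → 0 ≤ v' → v' ≤ u →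
      |u * γ (v / u) - u * γ (v' / u)| ≤ α * |v - v'| := by
    intro u v v' hv hvu hv' hv'u
    rcases eq_or_lt_of_le (hv.trans hvu) with hu | hu
    · simp [← hu]; positivity
    · have h := hlip (v / u) (v' / u) (div_nonneg hv hu.le) ((div_le_one hu).mpr hvu)
        (div_nonneg hv' hu.le) ((div_le_one hu).mpr hv'u)
      rw [← mul_sub, abs_mul, abs_of_pos hu]
      have habs : |v / u - v' / u| = |v - v'| / u := by
        rw [div_sub_div_same, abs_div, abs_of_pos hu]
      rw [habs] at h
      calc u * |γ (v / u) - γ (v' / u)| ≤ u * (α * (|v - v'| / u)) :=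
            mul_le_mul_of_nonneg_left h hu.le
        _ = α * |v - v'| := by field_simp
  have lipu : ∀ u u' v : ℝ, 0 ≤ v → v ≤ u' → u' ≤ u →
      0 ≤ u * γ (v / u) - u' * γ (v / u') ∧
        u * γ (v / u) - u' * γ (v / u') ≤ α * (u - u') := by
    intro u u' v hv hvu' hu'u
    constructor
    · rcases eq_or_lt_of_le (hv.trans hvu') with hu' | hu'
      · have hv0 : v = 0 := le_antisymm (hu' ▸ hvu') hv
        have := hpos u v hv (hvu'.trans hu'u)
        simp only [← hu', hv0, zero_mul] at *
        linarith
      · have hu : 0 < u := hu'.trans_le hu'u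
        have hle : v / u ≤ v / u' := by
          rw [div_le_div_iff₀ hu hu']; nlinarith
        have hg := hdec (v / u) (v / u') (div_nonneg hv hu.le) hle
          ((div_le_one hu').mpr hvu')
        have hg0 := h0 (v / u) (div_nonneg hv hu.le)
          ((div_le_one hu).mpr (hvu'.trans hu'u))
        nlinarith
    · have hA := hsub' u u' v hv hvu' hu'u
      have hB := edge u u' (hv.trans hvu') hu'u
      linarith
  have main : ∀ u v u' v' : ℝ, 0 ≤ v → v ≤ u → 0 ≤ v' → v' ≤ u' → u' ≤ u →
      |u * γ (v / u) - u' * γ (v' / u')| ≤ α * (|u - u'| + |v - v'|) := by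
    intro u v u' v' hv hvu hv' hv'u' hu'u
    have hv'u : v' ≤ u := hv'u'.trans hu'u
    have t1 := lipv u v v' hv hvu hv' hv'u
    have t2 := lipu u u' v' hv' hv'u' hu'u
    have habs2 : |u * γ (v' / u) - u' * γ (v' / u')| ≤ α * |u - u'| := by
      rw [abs_of_nonneg t2.1, abs_of_nonneg (sub_nonneg.mpr hu'u)]
      exact t2.2
    calc |u * γ (v / u) - u' * γ (v' / u')|
        ≤ |u * γ (v / u) - u * γ (v' / u)| + |u * γ (v' / u) - u' * γ (v' / u')| :=
          abs_sub_le _ _ _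
      _ ≤ α * |v - v'| + α * |u - u'| := add_le_add t1 habs2
      _ = α * (|u - u'| + |v - v'|) := by ring
  refine ⟨⟨?_, ?_, ?_, ?_, ?_⟩, ?_⟩
  · intro u hu
    rcases eq_or_lt_of_le hu with h | h
    · simp [← h]
    · show u * γ (u / u) = 0
      rw [div_self h.ne', h1, mul_zero]
  · exact hpos
  · exact fun u w v hv hvw hwu => hsub' u w v hv hvw hwu
  · intro u w v hv hvw hwu
    show w * γ (v / w) ≤ u * γ (v / u)
    linarith [(lipu u w v hv hvw hwu).1]
  · intro u w v hv hvw hwu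
    show u * γ (w / u) ≤ u * γ (v / u)
    rcases eq_or_lt_of_le (hv.trans (hvw.trans hwu)) with hu | hu
    · simp [← hu]
    · exact mul_le_mul_of_nonneg_left
        (hdec (v / u) (w / u) (div_nonneg hv hu.le)
          ((div_le_div_iff_of_pos_right hu).mpr hvw) ((div_le_one hu).mpr hwu)) hu.le
  · intro u v u' v' hv hvu hv' hv'u'
    rcases le_total u' u with h | h
    · exact main u v u' v' hv hvu hv' hv'u' h
    · rw [abs_sub_comm, abs_sub_comm u u', abs_sub_comm v v']
      exact main u' v' u v hv' hv'u' hv hvu h
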